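/- Let X = (X₁,…,Xₙ) be a square-integrable random vector on a probability space with mean E[Xᵢ] = (Fβ)ᵢ for some β ∈ ℝᵏ and covariances Cov(Xᵢ, Xⱼ) = Σᵢⱼ where Σ = σ₀²I_n + VDV'. Then for each j ∈ {1,…,l}, the BLUP natural estimator σ̂ⱼ² = ((T̂X)ⱼ)² satisfies E[((T̂X)ⱼ)²] = σⱼ² − σ₀²(Ŵ⁻¹)ⱼⱼ; in particular its bias is −σ₀²(Ŵ⁻¹)ⱼⱼ. -/

import Mathlib

open Matrix MeasureTheory

lemma aux_integrable_mul {Ω : Type} [MeasurableSpace Ω] {μ : Measure Ω}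
    {f g : Ω → ℝ} (hf : MemLp f 2 μ) (hg : MemLp g 2 μ) :
    Integrable (fun ω => f ω * g ω) μ := by
  have h := hf.smul (φ := g) hg (r := 1)
  rw [memLp_one_iff_integrable] at h
  simpa [Pi.smul_apply, smul_eq_mul, mul_comm, Pi.mul_def] using h

lemma aux_isUnit_FtF {n k l : ℕ} (F : Matrix (Fin n) (Fin k) ℝ) (V : Matrix (Fin n) (Fin l) ℝ)
    (hrank : (Matrix.fromCols F V).rank = k + l) :
    IsUnit (Fᵀ * F) := by
  have hGinj : Function.Injective (Matrix.fromCols F V).mulVecLin := by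
    rw [← LinearMap.ker_eq_bot]
    have h1 := LinearMap.finrank_range_add_finrank_ker (Matrix.fromCols F V).mulVecLin
    rw [Matrix.rank] at hrank
    rw [hrank] at h1
    have hdom : Module.finrank ℝ ((Fin k ⊕ Fin l) → ℝ) = k + l := by
      simp [Module.finrank_pi]
    rw [hdom] at h1
    have h0 : Module.finrank ℝ (LinearMap.ker (Matrix.fromCols F V).mulVecLin) = 0 := by omega
    exact Submodule.finrank_eq_zero.mp h0
  have hFinj : Function.Injective F.mulVecLin := by
    intro x y hxy
    have h : (Matrix.fromCols F V).mulVecLin (Sum.elim x 0)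
        = (Matrix.fromCols F V).mulVecLin (Sum.elim y 0) := by
      simp only [Matrix.mulVecLin_apply, Matrix.fromCols_mulVec_sumElim]
      simp [Matrix.mulVecLin_apply] at hxy
      rw [hxy]
    have h2 := hGinj h
    funext i
    exact congrFun h2 (Sum.inl i)
  have hker : LinearMap.ker (Fᵀ * F).mulVecLin = ⊥ := by
    rw [Matrix.ker_mulVecLin_transpose_mul_self, LinearMap.ker_eq_bot]
    exact hFinj
  rw [← Matrix.mulVec_injective_iff_isUnit]
  have := LinearMap.ker_eq_bot.mp hker
  intro x y hxy
  exact this (by rw [Matrix.mulVecLin_apply, Matrix.mulVecLin_apply]; exact hxy)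

lemma aux_key {n l : ℕ} (Mf : Matrix (Fin n) (Fin n) ℝ) (V : Matrix (Fin n) (Fin l) ℝ)
    (D What : Matrix (Fin l) (Fin l) ℝ) (σ0 : ℝ)
    (hMfT : Mfᵀ = Mf) (hMfMf : Mf * Mf = Mf) (hDT : Dᵀ = D)
    (hDdet : IsUnit D.det) (hWdet : IsUnit What.det)
    (hWhat : What = Vᵀ * Mf * V + σ0 • D⁻¹) :
    (What⁻¹ * Vᵀ * Mf) * (σ0 • (1 : Matrix (Fin n) (Fin n) ℝ) + V * D * Vᵀ)
      * (What⁻¹ * Vᵀ * Mf)ᵀ = D - σ0 • What⁻¹ := by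
  set W := What with hW
  set B := Vᵀ * Mf with hB
  have hWT : Wᵀ = W := by
    rw [hWhat]
    rw [transpose_add, transpose_smul, transpose_mul, transpose_mul, transpose_transpose,
      hMfT, Matrix.transpose_nonsing_inv, hDT, Matrix.mul_assoc]
  have hBt : Bᵀ = Mf * V := by rw [hB, transpose_mul, transpose_transpose, hMfT]
  have hTt : (W⁻¹ * Vᵀ * Mf)ᵀ = Bᵀ * W⁻¹ := by
    rw [Matrix.mul_assoc, ← hB, transpose_mul, Matrix.transpose_nonsing_inv, hWT]
  have hBBt : B * Bᵀ = B * V := by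
    rw [hBt, hB, Matrix.mul_assoc, ← Matrix.mul_assoc Mf, hMfMf, ← Matrix.mul_assoc]
  have hVBt : Vᵀ * Bᵀ = B * V := by rw [hBt, hB, Matrix.mul_assoc]
  have hAW : B * V + σ0 • D⁻¹ = W := by rw [hWhat, hB]
  have hBSB : B * (σ0 • (1 : Matrix (Fin n) (Fin n) ℝ) + V * D * Vᵀ) * Bᵀ
      = B * V * D * W := by
    have h1 : B * (σ0 • (1 : Matrix (Fin n) (Fin n) ℝ) + V * D * Vᵀ) * Bᵀ
        = σ0 • (B * V) + B * V * D * (B * V) := by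
      rw [Matrix.mul_add, Matrix.add_mul, Matrix.mul_smul, Matrix.mul_one, Matrix.smul_mul,
        hBBt]
      congr 1
      rw [← Matrix.mul_assoc B (V*D) Vᵀ, ← Matrix.mul_assoc B V D,
        Matrix.mul_assoc (B*V*D) Vᵀ Bᵀ, hVBt]
    rw [h1, ← hAW, Matrix.mul_add, Matrix.mul_smul, Matrix.mul_assoc (B*V) D D⁻¹,
      Matrix.mul_nonsing_inv D hDdet, Matrix.mul_one, add_comm]
  calc (W⁻¹ * Vᵀ * Mf) * (σ0 • (1 : Matrix (Fin n) (Fin n) ℝ) + V * D * Vᵀ)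
      * (W⁻¹ * Vᵀ * Mf)ᵀ
      = W⁻¹ * (B * (σ0 • (1 : Matrix (Fin n) (Fin n) ℝ) + V * D * Vᵀ) * Bᵀ) * W⁻¹ := by
        rw [hTt, Matrix.mul_assoc W⁻¹ Vᵀ Mf, ← hB]
        rw [Matrix.mul_assoc W⁻¹ B, ← Matrix.mul_assoc (W⁻¹ * (B * _)), Matrix.mul_assoc W⁻¹]
    _ = W⁻¹ * (B * V * D) * (W * W⁻¹) := by
        rw [hBSB, ← Matrix.mul_assoc W⁻¹ (B * V * D) W,
          Matrix.mul_assoc (W⁻¹ * (B * V * D)) W W⁻¹]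
    _ = W⁻¹ * (B * V * D) := by rw [Matrix.mul_nonsing_inv W hWdet, Matrix.mul_one]
    _ = D - σ0 • W⁻¹ := by
        have hAD : B * V = W - σ0 • D⁻¹ := by rw [← hAW, add_sub_cancel_right]
        rw [← Matrix.mul_assoc W⁻¹ (B*V) D]
        rw [hAD, Matrix.mul_sub, Matrix.sub_mul, Matrix.mul_smul, Matrix.smul_mul,
          Matrix.nonsing_inv_mul W hWdet, Matrix.one_mul,
          Matrix.mul_assoc W⁻¹ D⁻¹ D, Matrix.nonsing_inv_mul D hDdet, Matrix.mul_one]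

lemma aux_prob {n : ℕ} {Ω : Type} [MeasurableSpace Ω] (μ : Measure Ω) [IsProbabilityMeasure μ]
    (c mvec : Fin n → ℝ) (X : Ω → Fin n → ℝ)
    (hX2 : ∀ i, MemLp (fun ω => X ω i) 2 μ)
    (S : Matrix (Fin n) (Fin n) ℝ)
    (hcov : ∀ i i', ∫ ω, (X ω i - mvec i) * (X ω i' - mvec i') ∂μ = S i i') :
    ∫ ω, (∑ i, c i * (X ω i - mvec i))^2 ∂μ
      = ∑ i, ∑ i', c i * c i' * S i i' := by
  have hY2 : ∀ i, MemLp (fun ω => X ω i - mvec i) 2 μ :=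
    fun i => (hX2 i).sub (memLp_const _)
  have hint : ∀ i i' : Fin n,
      Integrable (fun ω => c i * c i' * ((X ω i - mvec i) * (X ω i' - mvec i'))) μ :=
    fun i i' => (aux_integrable_mul (hY2 i) (hY2 i')).const_mul _
  have hptw : ∀ ω, (∑ i, c i * (X ω i - mvec i))^2
      = ∑ i, ∑ i', c i * c i' * ((X ω i - mvec i) * (X ω i' - mvec i')) := by
    intro ω
    rw [sq, Finset.sum_mul_sum]
    exact Finset.sum_congr rfl fun i _ => Finset.sum_congr rfl fun i' _ => by ring
  simp_rw [hptw]
  rw [integral_finset_sum _ (fun i _ => integrable_finset_sum _ (fun i' _ => hint i i'))]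
  refine Finset.sum_congr rfl fun i _ => ?_
  rw [integral_finset_sum _ (fun i' _ => hint i i')]
  refine Finset.sum_congr rfl fun i' _ => ?_
  rw [MeasureTheory.integral_const_mul, hcov]

/-- Mean (and hence bias) of the BLUP natural estimator `σ̂ⱼ² = ((T̂X)ⱼ)²`:
for a square-integrable random vector `X` with mean `Fβ` and covariance
`Σ = σ₀²I_n + VDV'`, `E[((T̂X)ⱼ)²] = σⱼ² − σ₀²(Ŵ⁻¹)ⱼⱼ`, so the bias is
`−σ₀²(Ŵ⁻¹)ⱼⱼ`. -/
theorem stmt_7 {n k l : ℕ} (hn : 0 < n) (hk : 0 < k) (hl : 0 < l)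
    (hnkl : k + l < n)
    (F : Matrix (Fin n) (Fin k) ℝ) (V : Matrix (Fin n) (Fin l) ℝ)
    (hrank : (Matrix.fromCols F V).rank = k + l)
    (σ0 : ℝ) (hσ0 : 0 < σ0)
    (σ : Fin l → ℝ) (hσ : ∀ j, 0 < σ j)
    (D : Matrix (Fin l) (Fin l) ℝ) (hD : D = Matrix.diagonal σ)
    (Mf : Matrix (Fin n) (Fin n) ℝ) (hMf : Mf = 1 - F * (Fᵀ * F)⁻¹ * Fᵀ)
    (What : Matrix (Fin l) (Fin l) ℝ) (hWhat : What = Vᵀ * Mf * V + σ0 • D⁻¹)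
    (That : Matrix (Fin l) (Fin n) ℝ) (hThat : That = What⁻¹ * Vᵀ * Mf)
    (Sigma : Matrix (Fin n) (Fin n) ℝ)
    (hSigma : Sigma = σ0 • (1 : Matrix (Fin n) (Fin n) ℝ) + V * D * Vᵀ)
    (Ω : Type) [MeasurableSpace Ω] (μ : Measure Ω) [IsProbabilityMeasure μ]
    (X : Ω → Fin n → ℝ) (hXmeas : ∀ i, Measurable fun ω => X ω i)
    (hX2 : ∀ i, MemLp (fun ω => X ω i) 2 μ)
    (β : Fin k → ℝ)
    (hmean : ∀ i, ∫ ω, X ω i ∂μ = F.mulVec β i)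
    (hcov : ∀ i i', ∫ ω, (X ω i - F.mulVec β i) * (X ω i' - F.mulVec β i') ∂μ
      = Sigma i i') :
    ∀ j : Fin l,
      (∫ ω, (That.mulVec (X ω) j) ^ 2 ∂μ = σ j - σ0 * What⁻¹ j j) ∧
      ((∫ ω, (That.mulVec (X ω) j) ^ 2 ∂μ) - σ j = -(σ0 * What⁻¹ j j)) := by
  have hFTF : IsUnit (Fᵀ * F) := aux_isUnit_FtF F V hrank
  have hFTFdet : IsUnit (Fᵀ * F).det := (isUnit_iff_isUnit_det _).mp hFTF
  have hMfF : Mf * F = 0 := by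
    rw [hMf, Matrix.sub_mul, Matrix.one_mul, Matrix.mul_assoc (F * (Fᵀ*F)⁻¹) Fᵀ F,
      Matrix.mul_assoc F (Fᵀ*F)⁻¹ (Fᵀ*F), Matrix.nonsing_inv_mul _ hFTFdet,
      Matrix.mul_one, sub_self]
  have hMfT : Mfᵀ = Mf := by
    rw [hMf]
    have h0 : (Fᵀ * F)ᵀ = Fᵀ * F := by rw [transpose_mul, transpose_transpose]
    simp [transpose_sub, transpose_mul, transpose_transpose,
      Matrix.transpose_nonsing_inv, h0, Matrix.mul_assoc]
  have hMfMf : Mf * Mf = Mf := by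
    nth_rewrite 2 [hMf]
    rw [Matrix.mul_sub, Matrix.mul_one, ← Matrix.mul_assoc, ← Matrix.mul_assoc, hMfF,
      Matrix.zero_mul, Matrix.zero_mul, sub_zero]
  have hDT : Dᵀ = D := by rw [hD, Matrix.diagonal_transpose]
  have hDdet : IsUnit D.det := by
    rw [hD, Matrix.det_diagonal]
    exact (Finset.prod_pos (fun i _ => hσ i)).ne'.isUnit
  have hDinv : D⁻¹ = Matrix.diagonal (fun i => (σ i)⁻¹) := by
    rw [hD]
    refine Matrix.inv_eq_right_inv ?_
    rw [Matrix.diagonal_mul_diagonal]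
    rw [show (fun i => σ i * (σ i)⁻¹) = fun _ => (1:ℝ) from funext fun i =>
      mul_inv_cancel₀ (hσ i).ne']
    exact Matrix.diagonal_one
  have hWpd : What.PosDef := by
    rw [hWhat]
    have h1 : (Vᵀ * Mf * V).PosSemidef := by
      have h2 := Matrix.posSemidef_conjTranspose_mul_self (Mf * V)
      have h3 : (Mf * V)ᴴ * (Mf * V) = Vᵀ * Mf * V := by
        rw [Matrix.conjTranspose_eq_transpose_of_trivial, transpose_mul, hMfT,
          Matrix.mul_assoc Vᵀ Mf (Mf * V), ← Matrix.mul_assoc Mf Mf V, hMfMf,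
          ← Matrix.mul_assoc]
      rwa [h3] at h2
    have h4 : (σ0 • D⁻¹).PosDef := by
      rw [hDinv, ← Matrix.diagonal_smul]
      refine Matrix.PosDef.diagonal fun i => ?_
      simpa [smul_eq_mul] using mul_pos hσ0 (inv_pos.mpr (hσ i))
    exact Matrix.PosDef.posSemidef_add h1 h4
  have hWdet : IsUnit What.det := (isUnit_iff_isUnit_det _).mp hWpd.isUnit
  have hkey : That * Sigma * Thatᵀ = D - σ0 • What⁻¹ := by
    rw [hThat, hSigma]
    exact aux_key Mf V D What σ0 hMfT hMfMf hDT hDdet hWdet hWhat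
  have hTF : That * F = 0 := by
    rw [hThat, Matrix.mul_assoc (What⁻¹ * Vᵀ) Mf F, hMfF, Matrix.mul_zero]
  intro j
  have hTm : That.mulVec (F.mulVec β) = 0 := by
    rw [Matrix.mulVec_mulVec, hTF, Matrix.zero_mulVec]
  have hrep : ∀ ω, That.mulVec (X ω) j = ∑ i, That j i * (X ω i - F.mulVec β i) := by
    intro ω
    have h1 : That.mulVec (X ω) j = ∑ i, That j i * X ω i := by
      simp [Matrix.mulVec, dotProduct]
    have h2 : That.mulVec (F.mulVec β) j = ∑ i, That j i * F.mulVec β i := by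
      simp [Matrix.mulVec, dotProduct]
    have h3 : (∑ i, That j i * (X ω i - F.mulVec β i))
        = ∑ i, That j i * X ω i - ∑ i, That j i * F.mulVec β i := by
      rw [← Finset.sum_sub_distrib]
      exact Finset.sum_congr rfl fun i _ => by ring
    rw [h1, h3, ← h2, hTm]
    simp
  have hmain : ∫ ω, (That.mulVec (X ω) j)^2 ∂μ
      = ∑ i, ∑ i', That j i * That j i' * Sigma i i' := by
    simp_rw [hrep]
    exact aux_prob μ (fun i => That j i) (F.mulVec β) X hX2 Sigma hcov
  have hsum : ∑ i, ∑ i', That j i * That j i' * Sigma i i'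
      = (That * Sigma * Thatᵀ) j j := by
    have h5 : ∀ i', (That * Sigma) j i' * Thatᵀ i' j
        = ∑ i, That j i * That j i' * Sigma i i' := by
      intro i'
      rw [Matrix.mul_apply, transpose_apply, Finset.sum_mul]
      exact Finset.sum_congr rfl fun i _ => by ring
    rw [Matrix.mul_apply]
    simp_rw [h5]
    rw [Finset.sum_comm]
  have hfinal : ∫ ω, (That.mulVec (X ω) j)^2 ∂μ = σ j - σ0 * What⁻¹ j j := by
    rw [hmain, hsum, hkey, Matrix.sub_apply, Matrix.smul_apply, hD,
      Matrix.diagonal_apply_eq, smul_eq_mul]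
  exact ⟨hfinal, by rw [hfinal]; ring⟩
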